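/- For nonnegative integers j, k and all real p, q with z = p + iq: the Fourier-Wigner transform of the normalized Hermite functions e_n(x) = h_n(x)/√(2^n n! √π) satisfies V(e_{j+k}, e_j)(p, q) = (j! / (2π · 2^k · (j+k)!))^{1/2} · z^k · L_j^{(k)}(|z|²/2) · e^{-|z|²/4}. -/

import Mathlib

open MeasureTheory Complex Real

noncomputable def Hphys (n : ℕ) (x : ℝ) : ℝ :=
  (-1 : ℝ)^n * Real.exp (x^2) * iteratedDeriv n (fun t : ℝ => Real.exp (-t^2)) x

noncomputable def hFun (n : ℕ) (x : ℝ) : ℝ := Real.exp (-x^2/2) * Hphys n x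

noncomputable def Hc (m n : ℕ) (z : ℂ) : ℂ :=
  ∑ k ∈ Finset.range (min m n + 1),
    (-1 : ℂ)^k * (Nat.factorial k : ℂ) * (Nat.choose m k : ℂ) * (Nat.choose n k : ℂ)
      * z^(m-k) * (starRingEnd ℂ z)^(n-k)

noncomputable def Lag (n α : ℕ) (x : ℂ) : ℂ :=
  ∑ k ∈ Finset.range (n + 1),
    (-1 : ℂ)^k * (Nat.choose (n + α) (n - k) : ℂ) * x^k / (Nat.factorial k : ℂ)

noncomputable def eFun (n : ℕ) (x : ℝ) : ℝ :=
  hFun n x / Real.sqrt (2^n * (Nat.factorial n : ℝ) * Real.sqrt Real.pi)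

noncomputable def FW2 (f g : ℝ → ℂ) (p q : ℝ) : ℂ :=
  ((2 * Real.pi) ^ (-(1:ℝ)/2) : ℝ) *
    ∫ y : ℝ, Complex.exp (Complex.I * y * q) * f (y + p/2) * (starRingEnd ℂ) (g (y - p/2))

/-! ### Auxiliary development -/

noncomputable def HP : ℕ → Polynomial ℝ
  | 0 => 1
  | n+1 => Polynomial.C 2 * (Polynomial.X * HP n) - (HP n).derivative

lemma HP_deriv : ∀ n : ℕ, (HP n).derivative = Polynomial.C (2*(n:ℝ)) * HP (n-1) := by
  intro n
  induction n using Nat.strong_induction_on with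
  | _ n ih =>
    match n with
    | 0 => simp [HP]
    | 1 => simp [HP]
    | (n+2) =>
      have ih1 := ih (n+1) (by omega)
      have ih0 := ih n (by omega)
      have hp1 : HP (n+1) = Polynomial.C 2 * (Polynomial.X * HP n)
          - Polynomial.C (2*(n:ℝ)) * HP (n-1) := by
        rw [show HP (n+1) = Polynomial.C 2 * (Polynomial.X * HP n) - (HP n).derivative from rfl,
          ih0]
      show (Polynomial.C 2 * (Polynomial.X * HP (n+1)) - (HP (n+1)).derivative).derivative = _
      rw [show n+2-1 = n+1 from rfl]
      simp only [Polynomial.derivative_sub, Polynomial.derivative_mul, Polynomial.derivative_C,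
        Polynomial.derivative_X, ih1, ih0, Nat.add_sub_cancel]
      rw [hp1]
      push_cast
      simp only [Polynomial.C_add, Polynomial.C_mul, Polynomial.C_1, map_ofNat]
      ring

lemma HP_succ (n : ℕ) :
    HP (n+1) = Polynomial.C 2 * (Polynomial.X * HP n) - Polynomial.C (2*(n:ℝ)) * HP (n-1) := by
  rw [show HP (n+1) = Polynomial.C 2 * (Polynomial.X * HP n) - (HP n).derivative from rfl,
    HP_deriv]

lemma iteratedDeriv_gauss (n : ℕ) :
    iteratedDeriv n (fun t : ℝ => Real.exp (-t^2)) =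
      fun x => (-1:ℝ)^n * (HP n).eval x * Real.exp (-x^2) := by
  induction n with
  | zero => funext x; simp [HP]
  | succ n ih =>
      funext x
      rw [iteratedDeriv_succ, ih]
      have h1 : HasDerivAt (fun x : ℝ => (-1:ℝ)^n * (HP n).eval x * Real.exp (-x^2))
          ((-1:ℝ)^n * ((HP n).derivative.eval x * Real.exp (-x^2)
            + (HP n).eval x * (Real.exp (-x^2) * (-(2*x))))) x := by
        have hexp : HasDerivAt (fun x : ℝ => Real.exp (-x^2)) (Real.exp (-x^2) * (-(2*x))) x := by
          have h2 : HasDerivAt (fun x : ℝ => -x^2) (-(2*x)) x := by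
            simpa using (hasDerivAt_pow 2 x).fun_neg
          simpa using h2.exp
        have hpoly : HasDerivAt (fun x : ℝ => (HP n).eval x) ((HP n).derivative.eval x) x :=
          Polynomial.hasDerivAt _ _
        have := (hpoly.const_mul ((-1:ℝ)^n)).fun_mul hexp
        refine this.congr_deriv ?_
        ring
      rw [h1.deriv]
      have h2 : (HP (n+1)).eval x = 2 * ((HP n).eval x * x) - (HP n).derivative.eval x := by
        simp [show HP (n+1) = Polynomial.C 2 * (Polynomial.X * HP n) - (HP n).derivative from rfl]
        ring
      rw [pow_succ]
      rw [h2]; ring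

lemma hFun_eq (n : ℕ) (x : ℝ) : hFun n x = (HP n).eval x * Real.exp (-x^2/2) := by
  have : Hphys n x = (HP n).eval x := by
    rw [Hphys, iteratedDeriv_gauss]
    rw [show (-1:ℝ)^n * Real.exp (x^2) * ((-1:ℝ)^n * (HP n).eval x * Real.exp (-x^2))
      = ((-1:ℝ)^n)^2 * (HP n).eval x * (Real.exp (x^2) * Real.exp (-x^2)) from by ring]
    rw [← Real.exp_add]
    simp [← pow_mul, pow_mul']
  rw [hFun, this]; ring

/-! ### The integrand -/

noncomputable def fI (p q : ℝ) (S T : Polynomial ℝ) (y : ℝ) : ℂ :=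
  Complex.exp (Complex.I*y*q) *
    ((Polynomial.eval (y+p/2) S * Real.exp (-(y+p/2)^2/2) : ℝ) : ℂ) *
    ((Polynomial.eval (y-p/2) T * Real.exp (-(y-p/2)^2/2) : ℝ) : ℂ)

noncomputable def JI (p q : ℝ) (S T : Polynomial ℝ) : ℂ := ∫ y : ℝ, fI p q S T y

lemma integrable_poly_gauss (T : Polynomial ℝ) :
    Integrable (fun y : ℝ => Polynomial.eval y T * Real.exp (-y^2)) := by
  have : (fun y : ℝ => Polynomial.eval y T * Real.exp (-y^2))
      = fun y : ℝ => ∑ i ∈ Finset.range (T.natDegree + 1),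
          T.coeff i * (y^i * Real.exp (-y^2)) := by
    funext y
    rw [Polynomial.eval_eq_sum_range, Finset.sum_mul]
    congr 1; funext i; ring
  rw [this]
  apply integrable_finset_sum
  intro i _
  apply Integrable.const_mul
  have := integrable_rpow_mul_exp_neg_mul_sq (b := 1) one_pos (s := (i:ℝ)) (by exact lt_of_lt_of_le (by norm_num) (Nat.cast_nonneg i))
  simpa [Real.rpow_natCast] using this

lemma tendsto_poly_gauss_top (T : Polynomial ℝ) :
    Filter.Tendsto (fun y : ℝ => Polynomial.eval y T * Real.exp (-y^2)) Filter.atTop (nhds 0) := by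
  have : (fun y : ℝ => Polynomial.eval y T * Real.exp (-y^2))
      = fun y : ℝ => ∑ i ∈ Finset.range (T.natDegree + 1),
          T.coeff i * (y^i * Real.exp (-y^2)) := by
    funext y
    rw [Polynomial.eval_eq_sum_range, Finset.sum_mul]
    congr 1; funext i; ring
  rw [this]
  rw [show (0:ℝ) = ∑ i ∈ Finset.range (T.natDegree + 1), T.coeff i * 0 from by simp]
  apply tendsto_finset_sum
  intro i _
  apply Filter.Tendsto.const_mul
  have hlo := rpow_mul_exp_neg_mul_sq_isLittleO_exp_neg (b := 1) one_pos (i : ℝ)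
  have h0 : Filter.Tendsto (fun x : ℝ => Real.exp (-(1/2) * x)) Filter.atTop (nhds 0) := by
    apply Real.tendsto_exp_atBot.comp
    exact Filter.Tendsto.const_mul_atTop_of_neg (by norm_num) Filter.tendsto_id
  have := hlo.trans_tendsto h0
  have heq : (fun x : ℝ => x ^ (i:ℝ) * Real.exp (-1 * x^2)) =ᶠ[Filter.atTop]
      (fun x : ℝ => x ^ i * Real.exp (-x^2)) := by
    filter_upwards with x
    rw [Real.rpow_natCast]; ring_nf
  exact (Filter.Tendsto.congr' heq this)

lemma tendsto_poly_gauss_bot (T : Polynomial ℝ) :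
    Filter.Tendsto (fun y : ℝ => Polynomial.eval y T * Real.exp (-y^2)) Filter.atBot (nhds 0) := by
  have h := (tendsto_poly_gauss_top (T.comp (-Polynomial.X))).comp
    (Filter.tendsto_neg_atBot_atTop)
  refine h.congr fun y => ?_
  simp [Function.comp, Polynomial.eval_comp]

/-- pointwise form of the integrand -/
lemma fI_eq (p q : ℝ) (S T : Polynomial ℝ) (y : ℝ) :
    fI p q S T y = Complex.exp (Complex.I*y*q) *
      ((Polynomial.eval y ((S.comp (Polynomial.X + Polynomial.C (p/2)))
          * (T.comp (Polynomial.X - Polynomial.C (p/2))))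
        * Real.exp (-y^2) * Real.exp (-p^2/4) : ℝ) : ℂ) := by
  rw [fI]
  rw [mul_assoc, ← Complex.ofReal_mul]
  congr 2
  rw [Polynomial.eval_mul, Polynomial.eval_comp, Polynomial.eval_comp]
  simp only [Polynomial.eval_add, Polynomial.eval_sub, Polynomial.eval_X, Polynomial.eval_C]
  have he : Real.exp (-(y+p/2)^2/2) * Real.exp (-(y-p/2)^2/2)
      = Real.exp (-y^2) * Real.exp (-p^2/4) := by
    rw [← Real.exp_add, ← Real.exp_add]; congr 1; ring
  calc Polynomial.eval (y+p/2) S * Real.exp (-(y+p/2)^2/2)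
        * (Polynomial.eval (y-p/2) T * Real.exp (-(y-p/2)^2/2))
      = Polynomial.eval (y+p/2) S * Polynomial.eval (y-p/2) T
        * (Real.exp (-(y+p/2)^2/2) * Real.exp (-(y-p/2)^2/2)) := by ring
    _ = _ := by rw [he]; ring

lemma norm_fI (p q : ℝ) (S T : Polynomial ℝ) (y : ℝ) :
    ‖fI p q S T y‖ = |Polynomial.eval y ((S.comp (Polynomial.X + Polynomial.C (p/2)))
          * (T.comp (Polynomial.X - Polynomial.C (p/2)))) * Real.exp (-y^2)|
        * Real.exp (-p^2/4) := by
  rw [fI_eq, norm_mul]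
  have h1 : ‖Complex.exp (Complex.I*y*q)‖ = 1 := by
    rw [Complex.norm_exp]
    simp
  rw [h1, one_mul, Complex.norm_real, Real.norm_eq_abs, abs_mul,
    _root_.abs_of_nonneg (Real.exp_pos (-p^2/4)).le]

lemma integrable_fI (p q : ℝ) (S T : Polynomial ℝ) : Integrable (fI p q S T) := by
  have heq := funext (fI_eq p q S T)
  rw [heq]
  apply Integrable.bdd_mul (c := 1)
  · apply Integrable.ofReal
    exact (integrable_poly_gauss _).mul_const _
  · apply Continuous.aestronglyMeasurable
    fun_prop
  · refine Filter.Eventually.of_forall (fun x => ?_)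
    rw [Complex.norm_exp]
    simp

lemma tendsto_fI_top (p q : ℝ) (S T : Polynomial ℝ) :
    Filter.Tendsto (fI p q S T) Filter.atTop (nhds 0) := by
  apply squeeze_zero_norm (fun y => (norm_fI p q S T y).le)
  rw [show (0:ℝ) = 0 * Real.exp (-p^2/4) from by ring]
  apply Filter.Tendsto.mul_const
  have h := (tendsto_poly_gauss_top ((S.comp (Polynomial.X + Polynomial.C (p/2)))
    * (T.comp (Polynomial.X - Polynomial.C (p/2))))).abs
  simpa only [abs_zero] using h

lemma tendsto_fI_bot (p q : ℝ) (S T : Polynomial ℝ) :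
    Filter.Tendsto (fI p q S T) Filter.atBot (nhds 0) := by
  apply squeeze_zero_norm (fun y => (norm_fI p q S T y).le)
  rw [show (0:ℝ) = 0 * Real.exp (-p^2/4) from by ring]
  apply Filter.Tendsto.mul_const
  have h := (tendsto_poly_gauss_bot ((S.comp (Polynomial.X + Polynomial.C (p/2)))
    * (T.comp (Polynomial.X - Polynomial.C (p/2))))).abs
  simpa only [abs_zero] using h


/-! ### Derivative of the integrand -/

lemma hasDerivAt_gauss (S : Polynomial ℝ) (x : ℝ) :
    HasDerivAt (fun x : ℝ => Polynomial.eval x S * Real.exp (-x^2/2))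
      (Polynomial.eval x (S.derivative - Polynomial.X * S) * Real.exp (-x^2/2)) x := by
  have h2 : HasDerivAt (fun x : ℝ => -x^2/2) (-x) x := by
    have := ((hasDerivAt_pow 2 x).fun_neg).div_const 2
    refine this.congr_deriv ?_
    simp; ring
  have hexp : HasDerivAt (fun x : ℝ => Real.exp (-x^2/2)) (Real.exp (-x^2/2) * (-x)) x := by
    simpa using h2.exp
  have := (Polynomial.hasDerivAt S x).fun_mul hexp
  refine this.congr_deriv ?_
  simp only [Polynomial.eval_sub, Polynomial.eval_mul, Polynomial.eval_X]
  ring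

lemma hasDerivAt_fI (p q : ℝ) (S T : Polynomial ℝ) (y : ℝ) :
    HasDerivAt (fI p q S T)
      (Complex.I*q * fI p q S T y + fI p q (S.derivative - Polynomial.X*S) T y
        + fI p q S (T.derivative - Polynomial.X*T) y) y := by
  have hA : HasDerivAt
      (fun y : ℝ => ((Polynomial.eval (y+p/2) S * Real.exp (-(y+p/2)^2/2) : ℝ) : ℂ))
      ((Polynomial.eval (y+p/2) (S.derivative - Polynomial.X*S)
        * Real.exp (-(y+p/2)^2/2) : ℝ) : ℂ) y := by
    have h := (hasDerivAt_gauss S (y+p/2)).comp y ((hasDerivAt_id y).add_const (p/2))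
    simpa using h.ofReal_comp
  have hB : HasDerivAt
      (fun y : ℝ => ((Polynomial.eval (y-p/2) T * Real.exp (-(y-p/2)^2/2) : ℝ) : ℂ))
      ((Polynomial.eval (y-p/2) (T.derivative - Polynomial.X*T)
        * Real.exp (-(y-p/2)^2/2) : ℝ) : ℂ) y := by
    have h := (hasDerivAt_gauss T (y-p/2)).comp y ((hasDerivAt_id y).sub_const (p/2))
    simpa using h.ofReal_comp
  have hC : HasDerivAt (fun y : ℝ => Complex.exp (Complex.I*y*q))
      (Complex.I*q*Complex.exp (Complex.I*y*q)) y := by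
    have key : HasDerivAt (fun t : ℝ => Complex.exp ((Complex.I*q)*t))
        (Complex.exp ((Complex.I*q)*y)*(Complex.I*q)) y := by
      have base : HasDerivAt (fun z : ℂ => Complex.exp (Complex.I*q*z))
          (Complex.exp (Complex.I*q*(y:ℂ)) * (Complex.I*q)) ((y:ℝ):ℂ) := by
        simpa using ((hasDerivAt_id ((y:ℝ):ℂ)).const_mul (Complex.I*(q:ℂ))).cexp
      exact base.comp_ofReal
    have hfun : (fun y:ℝ => Complex.exp (Complex.I*y*q))
        = fun y:ℝ => Complex.exp ((Complex.I*q)*y) := by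
      funext t; congr 1; ring
    rw [hfun, show Complex.I*(y:ℂ)*q = (Complex.I*q)*y from by ring]
    rw [show Complex.I*(q:ℂ)*Complex.exp ((Complex.I*q)*y)
      = Complex.exp ((Complex.I*q)*y)*(Complex.I*q) from by ring]
    exact key
  have := (hC.fun_mul hA).fun_mul hB
  refine this.congr_deriv ?_
  simp only [fI]
  ring

/-! ### Integration by parts -/

lemma integral_deriv_zero {f f' : ℝ → ℂ} (h : ∀ x, HasDerivAt f (f' x) x)
    (hi : Integrable f') (ht : Filter.Tendsto f Filter.atTop (nhds 0))
    (hb : Filter.Tendsto f Filter.atBot (nhds 0)) : ∫ x, f' x = 0 := by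
  have h1 := integral_Ioi_of_hasDerivAt_of_tendsto' (a := 0) (fun x _ => h x)
    hi.integrableOn ht
  have h2 := integral_Iic_of_hasDerivAt_of_tendsto' (a := 0) (fun x _ => h x)
    hi.integrableOn hb
  rw [← intervalIntegral.integral_Iic_add_Ioi (b := (0:ℝ)) hi.integrableOn hi.integrableOn,
    h1, h2]
  ring

lemma fI_add_left (p q : ℝ) (S₁ S₂ T : Polynomial ℝ) (y : ℝ) :
    fI p q (S₁+S₂) T y = fI p q S₁ T y + fI p q S₂ T y := by
  simp only [fI, Polynomial.eval_add]; push_cast; ring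

lemma fI_sub_left (p q : ℝ) (S₁ S₂ T : Polynomial ℝ) (y : ℝ) :
    fI p q (S₁-S₂) T y = fI p q S₁ T y - fI p q S₂ T y := by
  simp only [fI, Polynomial.eval_sub]; push_cast; ring

lemma fI_smul_left (p q c : ℝ) (S T : Polynomial ℝ) (y : ℝ) :
    fI p q (Polynomial.C c * S) T y = (c:ℂ) * fI p q S T y := by
  simp only [fI, Polynomial.eval_mul, Polynomial.eval_C]; push_cast; ring

lemma fI_add_right (p q : ℝ) (S T₁ T₂ : Polynomial ℝ) (y : ℝ) :
    fI p q S (T₁+T₂) y = fI p q S T₁ y + fI p q S T₂ y := by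
  simp only [fI, Polynomial.eval_add]; push_cast; ring

lemma fI_sub_right (p q : ℝ) (S T₁ T₂ : Polynomial ℝ) (y : ℝ) :
    fI p q S (T₁-T₂) y = fI p q S T₁ y - fI p q S T₂ y := by
  simp only [fI, Polynomial.eval_sub]; push_cast; ring

lemma fI_smul_right (p q c : ℝ) (S T : Polynomial ℝ) (y : ℝ) :
    fI p q S (Polynomial.C c * T) y = (c:ℂ) * fI p q S T y := by
  simp only [fI, Polynomial.eval_mul, Polynomial.eval_C]; push_cast; ring

lemma fI_X (p q : ℝ) (S T : Polynomial ℝ) (y : ℝ) :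
    fI p q (Polynomial.X*S) T y - fI p q S (Polynomial.X*T) y = (p:ℂ) * fI p q S T y := by
  simp only [fI, Polynomial.eval_mul, Polynomial.eval_X]; push_cast; ring

lemma JI_add_left (p q : ℝ) (S₁ S₂ T : Polynomial ℝ) :
    JI p q (S₁+S₂) T = JI p q S₁ T + JI p q S₂ T := by
  simp only [JI]
  simp_rw [fI_add_left]
  exact integral_add (integrable_fI p q S₁ T) (integrable_fI p q S₂ T)

lemma JI_sub_left (p q : ℝ) (S₁ S₂ T : Polynomial ℝ) :
    JI p q (S₁-S₂) T = JI p q S₁ T - JI p q S₂ T := by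
  simp only [JI]
  simp_rw [fI_sub_left]
  exact integral_sub (integrable_fI p q S₁ T) (integrable_fI p q S₂ T)

lemma JI_smul_left (p q c : ℝ) (S T : Polynomial ℝ) :
    JI p q (Polynomial.C c * S) T = (c:ℂ) * JI p q S T := by
  simp only [JI]
  simp_rw [fI_smul_left]
  exact integral_const_mul _ _

lemma JI_add_right (p q : ℝ) (S T₁ T₂ : Polynomial ℝ) :
    JI p q S (T₁+T₂) = JI p q S T₁ + JI p q S T₂ := by
  simp only [JI]
  simp_rw [fI_add_right]
  exact integral_add (integrable_fI p q S T₁) (integrable_fI p q S T₂)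

lemma JI_sub_right (p q : ℝ) (S T₁ T₂ : Polynomial ℝ) :
    JI p q S (T₁-T₂) = JI p q S T₁ - JI p q S T₂ := by
  simp only [JI]
  simp_rw [fI_sub_right]
  exact integral_sub (integrable_fI p q S T₁) (integrable_fI p q S T₂)

lemma JI_smul_right (p q c : ℝ) (S T : Polynomial ℝ) :
    JI p q S (Polynomial.C c * T) = (c:ℂ) * JI p q S T := by
  simp only [JI]
  simp_rw [fI_smul_right]
  exact integral_const_mul _ _

lemma JI_X (p q : ℝ) (S T : Polynomial ℝ) :
    JI p q (Polynomial.X*S) T - JI p q S (Polynomial.X*T) = (p:ℂ) * JI p q S T := by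
  simp only [JI]
  rw [← integral_sub (integrable_fI p q _ T) (integrable_fI p q S _)]
  simp_rw [fI_X]
  exact integral_const_mul _ _

lemma JI_ibp (p q : ℝ) (S T : Polynomial ℝ) :
    Complex.I*q * JI p q S T + JI p q (S.derivative - Polynomial.X*S) T
      + JI p q S (T.derivative - Polynomial.X*T) = 0 := by
  have h := integral_deriv_zero (f := fI p q S T)
    (f' := fun y => Complex.I*q * fI p q S T y + fI p q (S.derivative - Polynomial.X*S) T y
        + fI p q S (T.derivative - Polynomial.X*T) y)
    (hasDerivAt_fI p q S T)
    ((((integrable_fI p q S T).const_mul _).add (integrable_fI p q _ T)).add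
      (integrable_fI p q S _))
    (tendsto_fI_top p q S T) (tendsto_fI_bot p q S T)
  rw [integral_add (f := fun y => Complex.I*q * fI p q S T y
        + fI p q (S.derivative - Polynomial.X*S) T y)
      (g := fun y => fI p q S (T.derivative - Polynomial.X*T) y)
      (((integrable_fI p q S T).const_mul _).add (integrable_fI p q _ T))
      (integrable_fI p q S _),
    integral_add (f := fun y => Complex.I*q * fI p q S T y)
      (g := fun y => fI p q (S.derivative - Polynomial.X*S) T y)
      ((integrable_fI p q S T).const_mul _) (integrable_fI p q _ T),
    integral_const_mul] at h
  exact h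

/-! ### Recurrences -/

lemma JI_two_X (p q : ℝ) (m : ℕ) (T : Polynomial ℝ) :
    2 * JI p q (Polynomial.X * HP m) T
      = JI p q (HP (m+1)) T + 2*(m:ℂ) * JI p q (HP (m-1)) T := by
  have : Polynomial.C (2:ℝ) * (Polynomial.X * HP m)
      = HP (m+1) + Polynomial.C (2*(m:ℝ)) * HP (m-1) := by
    rw [HP_succ]; ring
  have h := JI_smul_left p q 2 (Polynomial.X * HP m) T
  rw [this, JI_add_left, JI_smul_left] at h
  push_cast at h
  linear_combination -h

lemma JI_two_X' (p q : ℝ) (S : Polynomial ℝ) (n : ℕ) :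
    2 * JI p q S (Polynomial.X * HP n)
      = JI p q S (HP (n+1)) + 2*(n:ℂ) * JI p q S (HP (n-1)) := by
  have : Polynomial.C (2:ℝ) * (Polynomial.X * HP n)
      = HP (n+1) + Polynomial.C (2*(n:ℝ)) * HP (n-1) := by
    rw [HP_succ]; ring
  have h := JI_smul_right p q 2 S (Polynomial.X * HP n)
  rw [this, JI_add_right, JI_smul_right] at h
  push_cast at h
  linear_combination -h

lemma JI_ibp' (p q : ℝ) (m n : ℕ) :
    Complex.I*q * JI p q (HP m) (HP n)
      + (2*(m:ℂ) * JI p q (HP (m-1)) (HP n) - JI p q (Polynomial.X * HP m) (HP n))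
      + (2*(n:ℂ) * JI p q (HP m) (HP (n-1)) - JI p q (HP m) (Polynomial.X * HP n)) = 0 := by
  have h := JI_ibp p q (HP m) (HP n)
  rw [HP_deriv m, HP_deriv n, JI_sub_left, JI_sub_right, JI_smul_left, JI_smul_right] at h
  push_cast at h ⊢
  linear_combination h

lemma JI_rec1 (p q : ℝ) (m n : ℕ) :
    JI p q (HP (m+1)) (HP n) = ((p:ℂ) + Complex.I*q) * JI p q (HP m) (HP n)
      + 2*(n:ℂ) * JI p q (HP m) (HP (n-1)) := by
  have h1 := JI_ibp' p q m n
  have h2 := JI_X p q (HP m) (HP n)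
  have h3 := JI_two_X p q m (HP n)
  have h4 := JI_two_X' p q (HP m) n
  linear_combination h2 - h3 - h1

lemma JI_rec2 (p q : ℝ) (m n : ℕ) :
    JI p q (HP m) (HP (n+1)) = (Complex.I*q - (p:ℂ)) * JI p q (HP m) (HP n)
      + 2*(m:ℂ) * JI p q (HP (m-1)) (HP n) := by
  have h1 := JI_ibp' p q m n
  have h2 := JI_X p q (HP m) (HP n)
  have h3 := JI_two_X p q m (HP n)
  have h4 := JI_two_X' p q (HP m) n
  linear_combination -h4 - h1 - h2

/-! ### Base case -/

lemma JI_base (p q : ℝ) :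
    JI p q (HP 0) (HP 0)
      = (Real.sqrt Real.pi : ℂ) * Complex.exp (-((p^2+q^2 : ℝ):ℂ)/4) := by
  have hpt : ∀ y : ℝ, fI p q (HP 0) (HP 0) y
      = Complex.exp ((-1 : ℂ)*(y:ℂ)^2 + (Complex.I*q)*(y:ℂ) + (-((p^2:ℝ):ℂ)/4)) := by
    intro y
    rw [fI]
    have h0 : (HP 0) = (1 : Polynomial ℝ) := rfl
    rw [h0]
    simp only [Polynomial.eval_one, one_mul]
    rw [Complex.ofReal_exp, Complex.ofReal_exp, ← Complex.exp_add, ← Complex.exp_add]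
    congr 1
    push_cast
    ring
  rw [JI]
  have : (fun y : ℝ => fI p q (HP 0) (HP 0) y)
      = fun y : ℝ => Complex.exp ((-1 : ℂ)*(y:ℂ)^2 + (Complex.I*q)*(y:ℂ) + (-((p^2:ℝ):ℂ)/4)) :=
    funext hpt
  rw [this, integral_cexp_quadratic (by norm_num) (Complex.I*q) (-((p^2:ℝ):ℂ)/4)]
  congr 1
  · rw [show ((Real.pi:ℂ) / -(-1)) = ((Real.pi:ℝ):ℂ) from by push_cast; ring]
    rw [show ((1:ℂ)/2) = (((1:ℝ)/2 : ℝ):ℂ) from by norm_num]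
    rw [← Complex.ofReal_cpow Real.pi_pos.le]
    rw [Real.sqrt_eq_rpow]
  · congr 1
    rw [show (Complex.I*(q:ℂ))^2 = -((q:ℂ)^2) from by
      rw [mul_pow, Complex.I_sq]; ring]
    push_cast
    ring


/-! ### The combinatorial sum -/

noncomputable def Gsum (z : ℂ) (m n : ℕ) : ℂ :=
  ∑ r ∈ Finset.range (n+1), (-1:ℂ)^(n-r) * 2^r * (Nat.factorial r : ℂ)
    * (Nat.choose m r : ℂ) * (Nat.choose n r : ℂ) * z^(m-r) * (starRingEnd ℂ z)^(n-r)

lemma Gsum_zero_right (z : ℂ) (m : ℕ) : Gsum z m 0 = z^m := by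
  simp [Gsum]

lemma Gsum_left_zero (z : ℂ) (n : ℕ) : Gsum z 0 n = (-1:ℂ)^n * (starRingEnd ℂ z)^n := by
  rw [Gsum, Finset.sum_eq_single 0]
  · simp
  · intro r hr hne
    have : (0:ℕ).choose r = 0 := Nat.choose_eq_zero_of_lt (Nat.pos_of_ne_zero hne)
    simp [this]
  · intro habs
    exact absurd (Finset.mem_range.mpr (by omega)) habs

lemma Gsum_succ_left (z : ℂ) (m n : ℕ) :
    Gsum z (m+1) n = z * Gsum z m n + 2*(n:ℂ) * Gsum z m (n-1) := by
  set zb := starRingEnd ℂ z with hzb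
  cases n with
  | zero => simp [Gsum, pow_succ]; ring
  | succ n' =>
    have hG : ∀ M N : ℕ, Gsum z M N = ∑ r ∈ Finset.range (N+1),
        (fun M N r => (-1:ℂ)^(N-r) * 2^r * (Nat.factorial r : ℂ)
          * (Nat.choose M r : ℂ) * (Nat.choose N r : ℂ) * z^(M-r) * zb^(N-r)) M N r :=
      fun M N => rfl
    set t : ℕ → ℕ → ℕ → ℂ := fun M N r => (-1:ℂ)^(N-r) * 2^r * (Nat.factorial r : ℂ)
          * (Nat.choose M r : ℂ) * (Nat.choose N r : ℂ) * z^(M-r) * zb^(N-r) with ht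
    rw [show (n'+1:ℕ)-1 = n' from rfl]
    rw [hG (m+1) (n'+1), hG m (n'+1), hG m n']
    rw [Finset.sum_range_succ' (t (m+1) (n'+1)) (n'+1),
      Finset.sum_range_succ' (t m (n'+1)) (n'+1)]
    have h0 : t (m+1) (n'+1) 0 = z * t m (n'+1) 0 := by
      simp only [ht, Nat.sub_zero, pow_succ, Nat.choose_zero_right]
      ring
    have hstep : ∀ s ∈ Finset.range (n'+1),
        t (m+1) (n'+1) (s+1) = z * t m (n'+1) (s+1) + (2*((n':ℂ)+1)) * t m n' s := by
      intro s hs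
      simp only [ht, Nat.succ_sub_succ]
      have hch : (((m+1).choose (s+1) : ℕ) : ℂ) = (m.choose s : ℂ) + (m.choose (s+1) : ℂ) := by
        rw [Nat.choose_succ_succ]; push_cast; ring
      have hfac : (((s+1).factorial : ℕ) : ℂ) = ((s:ℂ)+1) * (s.factorial : ℂ) := by
        rw [Nat.factorial_succ]; push_cast; ring
      have h2 : (((n'+1).choose (s+1) : ℕ) : ℂ) * ((s:ℂ)+1)
          = ((n':ℂ)+1) * (n'.choose s : ℂ) := by
        have hnat := (Nat.add_one_mul_choose_eq n' s).symm
        have : (((n'+1).choose (s+1) * (s+1) : ℕ) : ℂ) = (((n'+1) * n'.choose s : ℕ) : ℂ) := by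
          exact_mod_cast congrArg (Nat.cast (R := ℂ)) hnat
        push_cast at this
        exact this
      by_cases hsm : s + 1 ≤ m
      · have hz : z^(m-s) = z * z^(m-(s+1)) := by
          rw [← pow_succ']
          congr 1
          omega
        rw [hch, hz, hfac]
        linear_combination ((-1:ℂ)^(n'-s) * 2^(s+1) * (s.factorial:ℂ)
          * (m.choose s : ℂ) * (z * z^(m-(s+1))) * zb^(n'-s)) * h2
      · have hc0 : ((m.choose (s+1) : ℕ) : ℂ) = 0 := by
          rw [Nat.choose_eq_zero_of_lt (by omega)]; simp
        rw [hch, hc0, hfac]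
        linear_combination ((-1:ℂ)^(n'-s) * 2^(s+1) * (s.factorial:ℂ)
          * (m.choose s : ℂ) * z^(m-s) * zb^(n'-s)) * h2
    rw [Finset.sum_congr rfl hstep, Finset.sum_add_distrib, h0]
    rw [← Finset.mul_sum, ← Finset.mul_sum]
    push_cast
    ring

lemma JI_eq (p q : ℝ) (m n : ℕ) :
    JI p q (HP m) (HP n) = (Real.sqrt Real.pi : ℂ) * Complex.exp (-((p^2+q^2 : ℝ):ℂ)/4)
      * Gsum ((p:ℂ) + Complex.I*q) m n := by
  have hzb : starRingEnd ℂ ((p:ℂ) + Complex.I*q) = (p:ℂ) - Complex.I*q := by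
    rw [map_add, map_mul, Complex.conj_ofReal, Complex.conj_ofReal, Complex.conj_I]
    ring
  induction m generalizing n with
  | zero =>
    induction n with
    | zero =>
      rw [JI_base, Gsum_left_zero]
      simp
    | succ n ihn =>
      rw [JI_rec2 p q 0 n, ihn, Gsum_left_zero, Gsum_left_zero, hzb]
      push_cast
      ring
  | succ m ihm =>
    rw [JI_rec1 p q m n, ihm n, ihm (n-1), Gsum_succ_left]
    push_cast
    ring

lemma Gsum_eval (z : ℂ) (j k : ℕ) (w : ℂ) (hw : (starRingEnd ℂ z) * z = 2 * w) :
    Gsum z (j+k) j = 2^j * (Nat.factorial j : ℂ) * z^k * Lag j k w := by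
  rw [Gsum, Lag]
  rw [← Finset.sum_range_reflect]
  rw [Finset.mul_sum]
  apply Finset.sum_congr rfl
  intro s hs
  have hsj : s ≤ j := by
    have := Finset.mem_range.mp hs
    omega
  rw [show j + 1 - 1 - s = j - s from by omega]
  rw [show j - (j - s) = s from by omega]
  rw [show j + k - (j - s) = k + s from by omega]
  have hzz : z^(k+s) * (starRingEnd ℂ z)^s = z^k * (2*w)^s := by
    rw [pow_add, mul_assoc, ← mul_pow, show z * starRingEnd ℂ z = 2*w from by
      rw [mul_comm]; exact hw]
  rw [Nat.choose_symm hsj]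
  have hfac2 : ((j.choose s : ℕ) : ℂ) * ((s.factorial : ℕ) : ℂ) * (((j-s).factorial : ℕ) : ℂ)
      = ((j.factorial : ℕ) : ℂ) := by
    exact_mod_cast congrArg (Nat.cast (R := ℂ)) (Nat.choose_mul_factorial_mul_factorial hsj)
  have h2p : (2:ℂ)^(j-s) * 2^s = 2^j := by
    rw [← pow_add]
    congr 1
    omega
  have hsf : ((s.factorial : ℕ) : ℂ) ≠ 0 := by
    exact_mod_cast Nat.factorial_ne_zero s
  field_simp
  linear_combination
      ((((j-s).factorial : ℕ):ℂ) * (((j+k).choose (j-s) : ℕ):ℂ) * ((j.choose s : ℕ):ℂ)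
        * ((s.factorial : ℕ):ℂ) * 2^(j-s)) * hzz
    + ((((j+k).choose (j-s) : ℕ):ℂ) * z^k * w^s * 2^(j-s) * 2^s) * hfac2
    + ((((j+k).choose (j-s) : ℕ):ℂ) * z^k * w^s * ((j.factorial:ℕ):ℂ)) * h2p

theorem FW_normalized_hermite (j k : ℕ) (p q : ℝ) :
    FW2 (fun x => (eFun (j + k) x : ℂ)) (fun x => (eFun j x : ℂ)) p q
      = (Real.sqrt ((Nat.factorial j : ℝ) / (2 * Real.pi * 2^k * (Nat.factorial (j + k) : ℝ))) : ℂ)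
          * ((p : ℂ) + Complex.I * q)^k
          * Lag j k ((((‖(p : ℂ) + Complex.I * q‖)^2 / 2 : ℝ)) : ℂ)
          * Complex.exp (-(((‖(p : ℂ) + Complex.I * q‖)^2 : ℝ) : ℂ) / 4) := by
  have hc1pos : (0:ℝ) < 2^(j+k) * ((j+k).factorial : ℝ) * Real.sqrt Real.pi := by positivity
  have hc2pos : (0:ℝ) < 2^j * ((j).factorial : ℝ) * Real.sqrt Real.pi := by positivity
  have hc1ne : Real.sqrt (2^(j+k) * ((j+k).factorial : ℝ) * Real.sqrt Real.pi) ≠ 0 := ne_of_gt (Real.sqrt_pos.mpr hc1pos)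
  have hc2ne : Real.sqrt (2^j * ((j).factorial : ℝ) * Real.sqrt Real.pi) ≠ 0 := ne_of_gt (Real.sqrt_pos.mpr hc2pos)
  have habs : (‖(p:ℂ) + Complex.I*q‖)^2 = p^2 + q^2 := by
    rw [Complex.sq_norm, show (p:ℂ) + Complex.I*q = (p:ℂ) + (q:ℂ)*Complex.I from by ring,
      Complex.normSq_add_mul_I]
  have hker : (fun y : ℝ => Complex.exp (Complex.I*y*q) * ((eFun (j+k) (y+p/2) : ℝ):ℂ)
        * (starRingEnd ℂ) ((eFun j (y-p/2) : ℝ):ℂ))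
      = fun y : ℝ => (((Real.sqrt (2^(j+k) * ((j+k).factorial : ℝ) * Real.sqrt Real.pi) * Real.sqrt (2^j * ((j).factorial : ℝ) * Real.sqrt Real.pi))⁻¹ : ℝ):ℂ) * fI p q (HP (j+k)) (HP j) y := by
    funext y
    rw [Complex.conj_ofReal]
    simp only [eFun, hFun_eq, fI]
    push_cast
    field_simp
  have hint : (∫ y : ℝ, Complex.exp (Complex.I*y*q) * ((eFun (j+k) (y+p/2) : ℝ):ℂ)
        * (starRingEnd ℂ) ((eFun j (y-p/2) : ℝ):ℂ))
      = (((Real.sqrt (2^(j+k) * ((j+k).factorial : ℝ) * Real.sqrt Real.pi) * Real.sqrt (2^j * ((j).factorial : ℝ) * Real.sqrt Real.pi))⁻¹ : ℝ):ℂ) * JI p q (HP (j+k)) (HP j) := by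
    rw [hker, JI]
    exact integral_const_mul _ _
  have hwz : (starRingEnd ℂ ((p:ℂ) + Complex.I*q)) * ((p:ℂ) + Complex.I*q)
      = 2 * ((((‖(p:ℂ) + Complex.I*q‖)^2/2 : ℝ)):ℂ) := by
    rw [mul_comm, Complex.mul_conj, ← Complex.sq_norm]
    push_cast
    ring
  have hreal : ((2*Real.pi) ^ (-(1:ℝ)/2)) * ((Real.sqrt (2^(j+k) * ((j+k).factorial : ℝ) * Real.sqrt Real.pi) * Real.sqrt (2^j * ((j).factorial : ℝ) * Real.sqrt Real.pi))⁻¹)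
        * (Real.sqrt Real.pi * (2^j * ((j).factorial:ℝ)))
      = Real.sqrt (((j).factorial:ℝ) / (2*Real.pi*2^k*((j+k).factorial:ℝ))) := by
    have h12 : ((2*Real.pi) ^ (-(1:ℝ)/2)) = (Real.sqrt (2*Real.pi))⁻¹ := by
      rw [show (-(1:ℝ)/2) = -(1/2 : ℝ) from by norm_num, Real.rpow_neg (by positivity),
        Real.sqrt_eq_rpow]
    rw [h12]
    have hL0 : 0 ≤ (Real.sqrt (2*Real.pi))⁻¹ * ((Real.sqrt (2^(j+k) * ((j+k).factorial : ℝ) * Real.sqrt Real.pi) * Real.sqrt (2^j * ((j).factorial : ℝ) * Real.sqrt Real.pi))⁻¹)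
        * (Real.sqrt Real.pi * (2^j * ((j).factorial:ℝ))) := by
      apply mul_nonneg (mul_nonneg ?_ ?_) ?_
      · positivity
      · exact inv_nonneg.mpr (mul_nonneg (Real.sqrt_nonneg _) (Real.sqrt_nonneg _))
      · positivity
    rw [← Real.sqrt_sq hL0]
    congr 1
    rw [mul_pow, mul_pow, mul_pow, inv_pow, inv_pow, mul_pow,
      Real.sq_sqrt (by positivity : (0:ℝ) ≤ 2*Real.pi),
      Real.sq_sqrt hc1pos.le, Real.sq_sqrt hc2pos.le,
      Real.sq_sqrt Real.pi_pos.le]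
    have hs2 : (Real.sqrt Real.pi) * (Real.sqrt Real.pi) = Real.pi :=
      Real.mul_self_sqrt Real.pi_pos.le
    have hA : ((j+k).factorial : ℝ) ≠ 0 := by
      exact_mod_cast Nat.factorial_ne_zero (j+k)
    have hB : ((j).factorial : ℝ) ≠ 0 := by
      exact_mod_cast Nat.factorial_ne_zero j
    have hsne : Real.sqrt Real.pi ≠ 0 := ne_of_gt (Real.sqrt_pos.mpr Real.pi_pos)
    field_simp
    rw [pow_add]
    linear_combination (-((2:ℝ)^j * (2:ℝ)^k)) * hs2
  -- assemble
  show ((2 * Real.pi) ^ (-(1:ℝ)/2) : ℝ) * (∫ y : ℝ, Complex.exp (Complex.I*y*q)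
      * ((eFun (j+k) (y+p/2) : ℝ):ℂ) * (starRingEnd ℂ) ((eFun j (y-p/2) : ℝ):ℂ)) = _
  rw [hint, JI_eq, Gsum_eval ((p:ℂ) + Complex.I*q) j k _ hwz]
  rw [show ((p^2+q^2 : ℝ):ℂ) = (((‖(p:ℂ) + Complex.I*q‖)^2 : ℝ):ℂ) from by
    rw [habs]]
  rw [← hreal]
  push_cast
  ring
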